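/- Uniqueness of strict iteration: if h : A ⇀ B satisfies h = f ; [h, id_B] for f : A ⇀ A + B, and additionally h(a) is undefined whenever the f-iteration from a diverges (never reaches B), then h = iter(f), where iter(f)(a) = b iff finitely many applications of f through the A-component reach inr(b). -/

import Mathlib

/-- `IterR f a b` holds when finitely many applications of `f : A ⇀ A + B`,
following the `A`-component, starting at `a`, reach `inr b`. -/
inductive IterR {A B : Type} (f : A → Option (A ⊕ B)) : A → B → Prop
  | done {a : A} {b : B} : f a = some (Sum.inr b) → IterR f a b
  | step {a a' : A} {b : B} :
      f a = some (Sum.inl a') → IterR f a' b → IterR f a b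

/-- Uniqueness of strict iteration: if `h : A ⇀ B` satisfies the fixed-point
equation `h = f ; [h, id_B]` and is undefined whenever the `f`-iteration diverges,
then `h = iter(f)`, i.e. `h a = b` exactly when finitely many applications of `f`
through the `A`-component reach `inr b`. -/
theorem iter_unique (A B : Type) (f : A → Option (A ⊕ B)) (h : A → Option B)
    (hfix : ∀ a : A, h a = (f a).bind (Sum.elim h some))
    (hdiv : ∀ a : A, (¬ ∃ b : B, IterR f a b) → h a = none) :
    ∀ (a : A) (b : B), h a = some b ↔ IterR f a b := by
  have key : ∀ (a : A) (b : B), IterR f a b → h a = some b := by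
    intro a b hit
    induction hit with
    | done hf => rw [hfix, hf]; rfl
    | step hf _ ih => rw [hfix, hf]; exact ih
  intro a b
  constructor
  · intro hha
    by_contra hn
    by_cases hex : ∃ b' : B, IterR f a b'
    · obtain ⟨b', hb'⟩ := hex
      have := key a b' hb'
      rw [hha] at this
      exact hn (Option.some_injective _ this ▸ hb')
    · rw [hdiv a hex] at hha; exact Option.some_ne_none b hha.symm
  · exact key a b
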